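/- Let G be b-quasi-bipartite with metric assumptions A1, A2, let T* be an optimum Steiner tree, and let π be a partition of V(T*) each of whose parts induces a connected subtree of T*. If every Steiner vertex of T* has degree at least 3, then (r̄(π) − 1) ≥ ((b+1)/(2b+1))·(r(π) − 1), where r(π) is the number of parts of π and r̄(π) the number of parts containing a terminal. -/

import Mathlib

open scoped Classical

noncomputable section

variable {V : Type*}

/-- The graph `G \ R`. -/
def offR (G : SimpleGraph V) (R : Set V) : SimpleGraph V where
  Adj u v := G.Adj u v ∧ u ∉ R ∧ v ∉ R
  symm := ⟨fun _ _ h => ⟨h.1.symm, h.2.2, h.2.1⟩⟩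
  loopless := ⟨fun v h => h.1.ne rfl⟩

/-- `G` is `b`-quasi-bipartite. -/
def QuasiBipartite (G : SimpleGraph V) (R : Set V) (b : ℕ) : Prop :=
  ∀ v ∉ R, ({u | (offR G R).Reachable v u}).ncard ≤ b

/-- Cost of a walk. -/
def walkCost (c : Sym2 V → ℝ) {G : SimpleGraph V} {u v : V} (p : G.Walk u v) : ℝ :=
  (p.edges.map c).sum

/-- Assumption A1. -/
def AssumptionA1 (G : SimpleGraph V) (R : Set V) (c : Sym2 V → ℝ) : Prop :=
  ∀ u ∈ R, ∀ v ∈ R, u ≠ v →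
    G.Adj u v ∧ ∀ p : G.Walk u v, c s(u, v) ≤ walkCost c p

/-- Assumption A2. -/
def AssumptionA2 (G : SimpleGraph V) (R : Set V) (c : Sym2 V → ℝ) : Prop :=
  ∀ v ∉ R, ∀ u, u ≠ v → (u ∈ R ∨ (offR G R).Reachable v u) →
    G.Adj u v ∧ ∀ p : G.Walk u v, c s(u, v) ≤ walkCost c p

namespace Stmt15Aux
open Finset
open Finset

variable {α : Type*} [Fintype α] [DecidableEq α] (T : SimpleGraph α) [DecidableRel T.Adj]

/-- edges of `T` with both ends in `S` -/
def ins (S : Finset α) : Finset (Sym2 α) :=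
  T.edgeFinset.filter (fun e => ∀ v ∈ e, v ∈ S)

/-- edges of `T` with at least one but not all ends in `S` -/
def bd (S : Finset α) : Finset (Sym2 α) :=
  T.edgeFinset.filter (fun e => (∃ v ∈ e, v ∈ S) ∧ ¬ ∀ v ∈ e, v ∈ S)

lemma ins_card (hT : T.IsAcyclic) {S : Finset α} (hS : (T.induce (S : Set α)).Connected) :
    (ins T S).card + 1 = S.card := by
  classical
  have hac : (T.induce (S : Set α)).IsAcyclic := by
    intro v c hc
    exact hT (c.map (SimpleGraph.Embedding.induce (G := T) (S : Set α)).toHom)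
      (hc.map (SimpleGraph.Embedding.induce (G := T) (S : Set α)).injective)
  have htree : (T.induce (S : Set α)).IsTree := ⟨hS, hac⟩
  have hcard := htree.card_edgeFinset
  have hcoe : Fintype.card ↥(S : Set α) = S.card := by
    simp [← Set.toFinset_card]
  rw [hcoe] at hcard
  rw [← hcard]
  congr 1
  refine (Finset.card_bij (fun e _ => Sym2.map (Subtype.val) e) ?_ ?_ ?_).symm
  · rintro e he
    induction e with
    | _ a b =>
      simp only [SimpleGraph.mem_edgeFinset, SimpleGraph.mem_edgeSet] at he
      simp only [ins, Sym2.map_pair_eq, Finset.mem_filter, SimpleGraph.mem_edgeFinset,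
        SimpleGraph.mem_edgeSet, Sym2.mem_iff]
      refine ⟨he, ?_⟩
      rintro v (rfl | rfl) <;> simp [a.2, b.2]
  · intro e₁ h₁ e₂ h₂ h
    exact Sym2.map.injective Subtype.val_injective h
  · rintro e he
    induction e with
    | _ a b =>
      simp only [ins, Finset.mem_filter, SimpleGraph.mem_edgeFinset, SimpleGraph.mem_edgeSet,
        Sym2.mem_iff] at he
      obtain ⟨hadj, hmem⟩ := he
      have ha : a ∈ S := hmem a (by simp)
      have hb : b ∈ S := hmem b (by simp)
      refine ⟨s(⟨a, ha⟩, ⟨b, hb⟩), ?_, ?_⟩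
      · simpa [SimpleGraph.mem_edgeFinset] using hadj
      · simp

omit [Fintype α] [DecidableRel T.Adj] in
lemma edge_card_filter {a b : α} (hab : a ≠ b) (S : Finset α) :
    (S.filter (fun v => v ∈ s(a, b))).card =
      (if a ∈ S then 1 else 0) + (if b ∈ S then 1 else 0) := by
  classical
  have h : S.filter (fun v => v ∈ s(a, b)) = ({a, b} : Finset α).filter (· ∈ S) := by
    ext x; simp [Sym2.mem_iff]; tauto
  rw [h, Finset.card_filter, Finset.sum_pair hab]

set_option maxRecDepth 8000 in
lemma handshake (S : Finset α) :
    ∑ v ∈ S, T.degree v = 2 * (ins T S).card + (bd T S).card := by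
  classical
  have hdeg : ∀ v : α, T.degree v = (T.edgeFinset.filter (fun e => v ∈ e)).card := by
    intro v
    rw [← SimpleGraph.card_incidenceFinset_eq_degree, SimpleGraph.incidenceFinset_eq_filter]
  have step : ∑ v ∈ S, T.degree v = ∑ e ∈ T.edgeFinset, (S.filter (fun v => v ∈ e)).card := by
    have h1 : ∑ v ∈ S, T.degree v
        = ∑ v ∈ S, ∑ e ∈ T.edgeFinset, if v ∈ e then 1 else 0 :=
      Finset.sum_congr rfl (fun v _ => by rw [hdeg v, Finset.card_filter])
    rw [h1, Finset.sum_comm]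
    exact Finset.sum_congr rfl (fun e _ => (Finset.card_filter _ _).symm)
  rw [step]
  rw [← Finset.sum_filter_add_sum_filter_not T.edgeFinset (fun e => ∀ v ∈ e, v ∈ S)]
  have h2 : ∑ e ∈ T.edgeFinset.filter (fun e => ∀ v ∈ e, v ∈ S),
      (S.filter (fun v => v ∈ e)).card = 2 * (ins T S).card := by
    rw [Finset.sum_congr rfl (g := fun _ => 2) ?_, Finset.sum_const, ins]
    · ring
    · intro e he
      rw [Finset.mem_filter] at he
      induction e with
      | _ a b =>
        have hab := T.ne_of_adj (by simpa [SimpleGraph.mem_edgeFinset] using he.1)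
        have ha : a ∈ S := he.2 a (by simp)
        have hb : b ∈ S := he.2 b (by simp)
        rw [edge_card_filter hab, if_pos ha, if_pos hb]
  rw [h2]
  congr 1
  rw [← Finset.sum_filter_add_sum_filter_not
    (T.edgeFinset.filter (fun e => ¬ ∀ v ∈ e, v ∈ S)) (fun e => ∃ v ∈ e, v ∈ S)]
  have hbd : (T.edgeFinset.filter (fun e => ¬ ∀ v ∈ e, v ∈ S)).filter (fun e => ∃ v ∈ e, v ∈ S)
      = bd T S := by
    ext e; simp [bd]; tauto
  have h1 : ∑ e ∈ bd T S, (S.filter (fun v => v ∈ e)).card = (bd T S).card := by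
    rw [Finset.sum_congr rfl (g := fun _ => 1) ?_, Finset.sum_const, smul_eq_mul, mul_one]
    intro e he
    rw [bd, Finset.mem_filter] at he
    induction e with
    | _ a b =>
      have hab := T.ne_of_adj (by simpa [SimpleGraph.mem_edgeFinset] using he.1)
      rw [edge_card_filter hab]
      obtain ⟨hE, hex, hnall⟩ := he
      rcases hex with ⟨v, hv, hvS⟩
      have : ¬ (a ∈ S ∧ b ∈ S) := fun ⟨ha, hb⟩ =>
        hnall (by rintro w hw; rcases Sym2.mem_iff.1 hw with rfl | rfl <;> assumption)
      rcases Sym2.mem_iff.1 hv with rfl | rfl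
      · have hb : b ∉ S := fun hb => this ⟨hvS, hb⟩
        simp [hvS, hb]
      · have ha : a ∉ S := fun ha => this ⟨ha, hvS⟩
        simp [hvS, ha]
  have h0 : ∑ e ∈ (T.edgeFinset.filter (fun e => ¬ ∀ v ∈ e, v ∈ S)).filter
      (fun e => ¬ ∃ v ∈ e, v ∈ S), (S.filter (fun v => v ∈ e)).card = 0 := by
    refine Finset.sum_eq_zero ?_
    intro e he
    rw [Finset.mem_filter] at he
    rw [Finset.card_eq_zero]
    ext v; simp only [Finset.mem_filter, Finset.notMem_empty, iff_false]
    rintro ⟨hvS, hve⟩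
    exact he.2 ⟨v, hve, hvS⟩
  rw [hbd, h1, h0, add_zero]

omit [Fintype α] [DecidableRel T.Adj] in
lemma ins_disjoint {p q : Finset α} (hpq : Disjoint p q) [Fintype α] [DecidableRel T.Adj] :
    Disjoint (ins T p) (ins T q) := by
  rw [Finset.disjoint_left]
  intro e hep heq
  rw [ins, Finset.mem_filter] at hep heq
  induction e with
  | _ a b =>
    exact Finset.disjoint_left.1 hpq (hep.2 a (by simp)) (heq.2 a (by simp))

/-- edges of `T` whose ends do not all lie in a single part -/
def crossing (P : Finset (Finset α)) : Finset (Sym2 α) :=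
  T.edgeFinset.filter (fun e => ¬ ∃ p ∈ P, ∀ v ∈ e, v ∈ p)

lemma crossing_card (hT : T.IsTree) (P : Finset (Finset α))
    (hcov : ∀ a : α, ∃ p ∈ P, a ∈ p)
    (hdisjP : ∀ p ∈ P, ∀ q ∈ P, p ≠ q → Disjoint p q)
    (hconn : ∀ p ∈ P, (T.induce (p : Set α)).Connected) :
    (crossing T P).card + 1 = P.card := by
  classical
  have htot : T.edgeFinset.card + 1 = Fintype.card α := hT.card_edgeFinset
  have hsplit : T.edgeFinset.card = (crossing T P).card + ∑ p ∈ P, (ins T p).card := by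
    rw [← Finset.card_filter_add_card_filter_not
      (s := T.edgeFinset) (p := fun e => ¬ ∃ p ∈ P, ∀ v ∈ e, v ∈ p)]
    congr 1
    have hbu : T.edgeFinset.filter (fun e => ¬ ¬ ∃ p ∈ P, ∀ v ∈ e, v ∈ p)
        = P.biUnion (fun p => ins T p) := by
      ext e
      simp only [Finset.mem_filter, not_not, Finset.mem_biUnion, ins]
      constructor
      · rintro ⟨he, p, hp, hall⟩; exact ⟨p, hp, he, hall⟩
      · rintro ⟨p, hp, he, hall⟩; exact ⟨he, p, hp, hall⟩
    rw [hbu, Finset.card_biUnion]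
    intro p hp q hq hpq
    exact ins_disjoint T (hdisjP p hp q hq hpq)
  have hsum : ∑ p ∈ P, (ins T p).card + P.card = Fintype.card α := by
    have h1 : ∑ p ∈ P, ((ins T p).card + 1) = ∑ p ∈ P, p.card :=
      Finset.sum_congr rfl (fun p hp => ins_card T hT.2 (hconn p hp))
    have h2 : ∑ p ∈ P, p.card = Fintype.card α := by
      have hbu : P.biUnion (fun p => p) = Finset.univ := by
        ext a
        simp only [Finset.mem_biUnion, Finset.mem_univ, iff_true]
        exact hcov a
      rw [← Finset.card_biUnion (fun p hp q hq hpq => hdisjP p hp q hq hpq), hbu, Finset.card_univ]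
    rw [← h2, ← h1, Finset.sum_add_distrib, Finset.sum_const, smul_eq_mul, mul_one]
  omega

end Stmt15Aux
namespace Stmt15Aux
open Finset

variable {α : Type*} [Fintype α] [DecidableEq α] (T : SimpleGraph α) [DecidableRel T.Adj]

/-- the graph on Steiner parts, adjacent when joined by an edge of `T` -/
def clusterGraph (SP : Finset (Finset α)) : SimpleGraph {p // p ∈ SP} where
  Adj x y := x ≠ y ∧ ∃ a ∈ x.1, ∃ u ∈ y.1, T.Adj a u
  symm := by
    refine ⟨?_⟩
    rintro x y ⟨hxy, a, ha, u, hu, hadj⟩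
    exact ⟨hxy.symm, u, hu, a, ha, hadj.symm⟩
  loopless := ⟨fun x h => h.1 rfl⟩

omit [Fintype α] [DecidableRel T.Adj] in
lemma reach_of_part {S p : Finset α} (hp : (T.induce (p : Set α)).Connected)
    (hsub : p ⊆ S) {a b : α} (ha : a ∈ p) (hb : b ∈ p) :
    (T.induce (S : Set α)).Reachable ⟨a, by simpa using hsub ha⟩ ⟨b, by simpa using hsub hb⟩ := by
  have h := hp.preconnected ⟨a, by simpa using ha⟩ ⟨b, by simpa using hb⟩
  have hle : (p : Set α) ≤ (S : Set α) := by exact_mod_cast hsub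
  exact h.map (SimpleGraph.induceHomOfLE T hle).toHom

omit [Fintype α] [DecidableRel T.Adj] in
lemma cluster_walk_reach (SP : Finset (Finset α))
    (hconn : ∀ p ∈ SP, (T.induce (p : Set α)).Connected)
    (U : Finset α) (c : (clusterGraph T SP).ConnectedComponent)
    (hU1 : ∀ x : {p // p ∈ SP}, (clusterGraph T SP).connectedComponentMk x = c → x.1 ⊆ U) :
    ∀ (x y : {p // p ∈ SP}) (_ : (clusterGraph T SP).Walk x y),
      (clusterGraph T SP).connectedComponentMk x = c →
      ∀ a b, a ∈ x.1 → b ∈ y.1 → ∀ (ha' : a ∈ (U : Set α)) (hb' : b ∈ (U : Set α)),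
      (T.induce (U : Set α)).Reachable ⟨a, ha'⟩ ⟨b, hb'⟩ := by
  intro x y w
  induction w with
  | nil =>
    intro hc a b ha hb ha' hb'
    exact reach_of_part T (hconn _ (Subtype.coe_prop _)) (hU1 _ hc) ha hb
  | @cons x z y h w ih =>
    intro hc a b ha hb ha' hb'
    have hz : (clusterGraph T SP).connectedComponentMk z = c :=
      (SimpleGraph.ConnectedComponent.sound h.symm.reachable).trans hc
    obtain ⟨hxz, a', ha', u', hu', hadj⟩ := h
    have haU' : a' ∈ (U : Set α) := by simpa using hU1 x hc ha'
    have huU' : u' ∈ (U : Set α) := by simpa using hU1 z hz hu'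
    have r1 : (T.induce (U : Set α)).Reachable ⟨a, ‹_›⟩ ⟨a', haU'⟩ :=
      reach_of_part T (hconn _ (Subtype.coe_prop _)) (hU1 _ hc) ha ha'
    have r2 : (T.induce (U : Set α)).Adj ⟨a', haU'⟩ ⟨u', huU'⟩ := hadj
    have r3 := ih hz u' b hu' hb huU' hb'
    exact (r1.trans r2.reachable).trans r3

omit [Fintype α] [DecidableRel T.Adj] in
lemma cluster_connected (SP : Finset (Finset α))
    (hconn : ∀ p ∈ SP, (T.induce (p : Set α)).Connected)
    (U : Finset α) (c : (clusterGraph T SP).ConnectedComponent)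
    (hU1 : ∀ x : {p // p ∈ SP}, (clusterGraph T SP).connectedComponentMk x = c → x.1 ⊆ U)
    (hU2 : ∀ a ∈ U, ∃ x : {p // p ∈ SP},
      (clusterGraph T SP).connectedComponentMk x = c ∧ a ∈ x.1)
    (hUne : U.Nonempty) :
    (T.induce (U : Set α)).Connected := by
  rw [SimpleGraph.connected_iff]
  constructor
  · rintro ⟨a, haU⟩ ⟨b, hbU⟩
    obtain ⟨x, hxc, hax⟩ := hU2 a (by simpa using haU)
    obtain ⟨y, hyc, hby⟩ := hU2 b (by simpa using hbU)
    obtain ⟨w⟩ := SimpleGraph.ConnectedComponent.exact (hxc.trans hyc.symm)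
    exact cluster_walk_reach T SP hconn U c hU1 x y w hxc a b hax hby haU hbU
  · obtain ⟨a, ha⟩ := hUne
    exact ⟨⟨a, by simpa using ha⟩⟩

end Stmt15Aux
namespace Stmt15Aux
open Finset

variable {α : Type*} [Fintype α] [DecidableEq α] (T : SimpleGraph α) [DecidableRel T.Adj]

omit [Fintype α] [DecidableEq α] [DecidableRel T.Adj] in
lemma exists_mem_sym2 (e : Sym2 α) : ∃ v, v ∈ e := by
  induction e with
  | _ a b => exact ⟨a, by simp⟩

lemma mem_ins {S : Finset α} {e : Sym2 α} :
    e ∈ ins T S ↔ e ∈ T.edgeFinset ∧ ∀ v ∈ e, v ∈ S := by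
  rw [ins, Finset.mem_filter]

lemma mem_bd {S : Finset α} {e : Sym2 α} :
    e ∈ bd T S ↔ e ∈ T.edgeFinset ∧ ((∃ v ∈ e, v ∈ S) ∧ ¬ ∀ v ∈ e, v ∈ S) := by
  rw [bd, Finset.mem_filter]

lemma mem_crossing {P : Finset (Finset α)} {e : Sym2 α} :
    e ∈ crossing T P ↔ e ∈ T.edgeFinset ∧ ¬ ∃ p ∈ P, ∀ v ∈ e, v ∈ p := by
  rw [crossing, Finset.mem_filter]

lemma core (hT : T.IsTree) (Rt : Set α) (b : ℕ) (hb : 1 ≤ b)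
    (hdeg3 : ∀ v, v ∉ Rt → 3 ≤ (T.neighborSet v).ncard)
    (hsmall : ∀ U : Finset α, (∀ v ∈ U, v ∉ Rt) → (T.induce (U : Set α)).Connected → U.card ≤ b)
    (P : Finset (Finset α))
    (hcov : ∀ a : α, ∃ p ∈ P, a ∈ p)
    (hdisjP : ∀ p ∈ P, ∀ q ∈ P, p ≠ q → Disjoint p q)
    (hne : ∀ p ∈ P, p.Nonempty)
    (hconn : ∀ p ∈ P, (T.induce (p : Set α)).Connected)
    (SP : Finset (Finset α)) (hSP_sub : SP ⊆ P)
    (hSP_iff : ∀ p ∈ P, (p ∈ SP ↔ ∀ v ∈ p, v ∉ Rt)) :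
    ((b : ℝ) + 1) / (2 * (b : ℝ) + 1) * ((P.card : ℝ) - 1) ≤
      ((P.card : ℝ) - (SP.card : ℝ)) - 1 := by
  classical
  have hSPP : ∀ p ∈ SP, p ∈ P := fun p hp => hSP_sub hp
  have hSPst : ∀ p ∈ SP, ∀ v ∈ p, v ∉ Rt := fun p hp =>
    (hSP_iff p (hSP_sub hp)).1 hp
  set K := clusterGraph T SP with hK
  set mk := K.connectedComponentMk with hmk
  set CC : Finset K.ConnectedComponent := Finset.univ.image mk with hCC
  set fib : K.ConnectedComponent → Finset {p // p ∈ SP} :=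
    fun c => Finset.univ.filter (fun x => mk x = c) with hfib
  set Pc : K.ConnectedComponent → Finset (Finset α) :=
    fun c => (fib c).image Subtype.val with hPcdef
  set Uc : K.ConnectedComponent → Finset α := fun c => (Pc c).biUnion (fun p => p) with hUcdef
  have hPc_card : ∀ c, (Pc c).card = (fib c).card := fun c =>
    Finset.card_image_of_injective _ Subtype.val_injective
  have hPc_SP : ∀ c, ∀ p ∈ Pc c, p ∈ SP := by
    intro c p hp
    obtain ⟨x, _, rfl⟩ := Finset.mem_image.1 hp
    exact x.2
  have hPc_mk : ∀ c, ∀ p (hp : p ∈ Pc c), mk ⟨p, hPc_SP c p hp⟩ = c := by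
    intro c p hp
    obtain ⟨x, hx, rfl⟩ := Finset.mem_image.1 hp
    exact (Finset.mem_filter.1 hx).2
  have hmem_Pc : ∀ c (x : {p // p ∈ SP}), mk x = c → x.1 ∈ Pc c := by
    intro c x hx
    exact Finset.mem_image.2 ⟨x, Finset.mem_filter.2 ⟨Finset.mem_univ _, hx⟩, rfl⟩
  have hUc_mem : ∀ c v, v ∈ Uc c ↔ ∃ p ∈ Pc c, v ∈ p := by
    intro c v; rw [hUcdef]; simp
  have hpart_unique : ∀ {p q : Finset α}, p ∈ P → q ∈ P → ∀ {v}, v ∈ p → v ∈ q → p = q := by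
    intro p q hp hq v hvp hvq
    by_contra hpq
    exact Finset.disjoint_left.1 (hdisjP p hp q hq hpq) hvp hvq
  have hUc_part : ∀ c {p}, p ∈ P → ∀ {v}, v ∈ p → v ∈ Uc c → p ∈ Pc c := by
    intro c p hp v hvp hvU
    obtain ⟨q, hq, hvq⟩ := (hUc_mem c v).1 hvU
    rwa [hpart_unique hp (hSPP q (hPc_SP c q hq)) hvp hvq]
  have hUc_steiner : ∀ c, ∀ v ∈ Uc c, v ∉ Rt := by
    intro c v hv
    obtain ⟨p, hp, hvp⟩ := (hUc_mem c v).1 hv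
    exact hSPst p (hPc_SP c p hp) v hvp
  have hUc_disj : ∀ {c c'}, c ≠ c' → Disjoint (Uc c) (Uc c') := by
    intro c c' hcc
    rw [Finset.disjoint_left]
    intro v hv hv'
    obtain ⟨p, hp, hvp⟩ := (hUc_mem c v).1 hv
    obtain ⟨q, hq, hvq⟩ := (hUc_mem c' v).1 hv'
    have hpq : p = q :=
      hpart_unique (hSPP p (hPc_SP c p hp)) (hSPP q (hPc_SP c' q hq)) hvp hvq
    subst hpq
    exact hcc ((hPc_mk c p hp).symm.trans (hPc_mk c' p hq))
  have hPc_ne : ∀ c ∈ CC, (Pc c).Nonempty := by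
    intro c hc
    obtain ⟨x, _, rfl⟩ := Finset.mem_image.1 hc
    exact ⟨x.1, hmem_Pc _ x rfl⟩
  have hUc_ne : ∀ c ∈ CC, (Uc c).Nonempty := by
    intro c hc
    obtain ⟨p, hp⟩ := hPc_ne c hc
    obtain ⟨v, hv⟩ := hne p (hSPP p (hPc_SP c p hp))
    exact ⟨v, (hUc_mem c v).2 ⟨p, hp, hv⟩⟩
  have hUc_conn : ∀ c ∈ CC, (T.induce ((Uc c : Finset α) : Set α)).Connected := by
    intro c hc
    refine cluster_connected T SP (fun p hp => hconn p (hSPP p hp)) (Uc c) c ?_ ?_ (hUc_ne c hc)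
    · intro x hx v hv
      exact (hUc_mem c v).2 ⟨x.1, hmem_Pc c x hx, hv⟩
    · intro a ha
      obtain ⟨p, hp, hap⟩ := (hUc_mem c a).1 ha
      exact ⟨⟨p, hPc_SP c p hp⟩, hPc_mk c p hp, hap⟩
  have hUc_b : ∀ c ∈ CC, (Uc c).card ≤ b := fun c hc =>
    hsmall _ (hUc_steiner c) (hUc_conn c hc)
  have hUc_card : ∀ c, (Uc c).card = ∑ p ∈ Pc c, p.card := by
    intro c
    exact Finset.card_biUnion (fun p hp q hq hpq =>
      hdisjP p (hSPP p (hPc_SP c p hp)) q (hSPP q (hPc_SP c q hq)) hpq)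
  have hPc_le_Uc : ∀ c, (Pc c).card ≤ (Uc c).card := by
    intro c
    rw [hUc_card]
    calc (Pc c).card = ∑ _p ∈ Pc c, 1 := by simp
      _ ≤ ∑ p ∈ Pc c, p.card := Finset.sum_le_sum (fun p hp =>
          Finset.card_pos.2 (hne p (hSPP p (hPc_SP c p hp))))
  have hinsUc : ∀ c ∈ CC, (ins T (Uc c)).card + 1 = (Uc c).card := fun c hc =>
    ins_card T hT.2 (hUc_conn c hc)
  set InC : K.ConnectedComponent → Finset (Sym2 α) :=
    fun c => (crossing T P).filter (fun e => ∀ v ∈ e, v ∈ Uc c) with hInCdef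
  have hInC_mem : ∀ c e, e ∈ InC c ↔ e ∈ crossing T P ∧ ∀ v ∈ e, v ∈ Uc c := by
    intro c e; rw [hInCdef]; exact Finset.mem_filter
  have hins_split : ∀ c, (ins T (Uc c)).card = ∑ p ∈ Pc c, (ins T p).card + (InC c).card := by
    intro c
    rw [← Finset.card_filter_add_card_filter_not
      (s := ins T (Uc c)) (p := fun e => ∃ p ∈ P, ∀ v ∈ e, v ∈ p)]
    congr 1
    · have heq : (ins T (Uc c)).filter (fun e => ∃ p ∈ P, ∀ v ∈ e, v ∈ p)
          = (Pc c).biUnion (fun p => ins T p) := by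
        ext e
        rw [Finset.mem_filter, Finset.mem_biUnion]
        constructor
        · rintro ⟨hi, p, hp, hallp⟩
          rw [mem_ins] at hi
          obtain ⟨v, hv⟩ := exists_mem_sym2 e
          refine ⟨p, hUc_part c hp (hallp v hv) (hi.2 v hv), ?_⟩
          rw [mem_ins]
          exact ⟨hi.1, hallp⟩
        · rintro ⟨p, hp, he⟩
          rw [mem_ins] at he
          have hsub : ∀ v ∈ p, v ∈ Uc c := fun v hv => (hUc_mem c v).2 ⟨p, hp, hv⟩
          refine ⟨?_, p, hSPP p (hPc_SP c p hp), he.2⟩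
          rw [mem_ins]
          exact ⟨he.1, fun v hv => hsub v (he.2 v hv)⟩
      rw [heq]
      exact Finset.card_biUnion (fun p hp q hq hpq => ins_disjoint T
        (hdisjP p (hSPP p (hPc_SP c p hp)) q (hSPP q (hPc_SP c q hq)) hpq))
    · congr 1
      ext e
      rw [Finset.mem_filter, hInC_mem, mem_ins, mem_crossing]
      tauto
  have hInC_card : ∀ c ∈ CC, (InC c).card + 1 = (Pc c).card := by
    intro c hc
    have h1 := hinsUc c hc
    have h2 := hins_split c
    have h3 : ∑ p ∈ Pc c, ((ins T p).card + 1) = ∑ p ∈ Pc c, p.card :=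
      Finset.sum_congr rfl (fun p hp => ins_card T hT.2 (hconn p (hSPP p (hPc_SP c p hp))))
    have h4 := hUc_card c
    rw [Finset.sum_add_distrib, Finset.sum_const, smul_eq_mul, mul_one] at h3
    omega
  have hbd_card : ∀ c ∈ CC, (Uc c).card + 2 ≤ (bd T (Uc c)).card := by
    intro c hc
    have hh := handshake T (Uc c)
    have hdegsum : 3 * (Uc c).card ≤ ∑ v ∈ Uc c, T.degree v := by
      calc 3 * (Uc c).card = ∑ _v ∈ Uc c, 3 := by rw [Finset.sum_const, smul_eq_mul, mul_comm]
        _ ≤ _ := Finset.sum_le_sum (fun v hv => by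
            have h := hdeg3 v (hUc_steiner c v hv)
            rwa [Set.ncard_eq_toFinset_card', Set.toFinset_card,
              SimpleGraph.card_neighborSet_eq_degree] at h)
    have h1 := hinsUc c hc
    omega
  have hbd_cross : ∀ c, bd T (Uc c) ⊆ crossing T P := by
    intro c e he
    rw [mem_bd] at he
    obtain ⟨heE, ⟨v, hve, hvU⟩, hnall⟩ := he
    rw [mem_crossing]
    refine ⟨heE, ?_⟩
    rintro ⟨p, hp, hallp⟩
    have hpPc : p ∈ Pc c := hUc_part c hp (hallp v hve) hvU
    exact hnall (fun w hw => (hUc_mem c w).2 ⟨p, hpPc, hallp w hw⟩)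
  set Fc : K.ConnectedComponent → Finset (Sym2 α) := fun c => InC c ∪ bd T (Uc c) with hFcdef
  have hFc_sub : ∀ c, Fc c ⊆ crossing T P := by
    intro c
    rw [hFcdef]
    exact Finset.union_subset (Finset.filter_subset _ _) (hbd_cross c)
  have hFc_card : ∀ c ∈ CC, (InC c).card + (bd T (Uc c)).card = (Fc c).card := by
    intro c hc
    have hdisj : Disjoint (InC c) (bd T (Uc c)) := by
      rw [Finset.disjoint_left]
      intro e he hbe
      rw [hInC_mem] at he
      rw [mem_bd] at hbe
      exact hbe.2.2 he.2
    rw [hFcdef]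
    exact (Finset.card_union_of_disjoint hdisj).symm
  have hFc_disj : ∀ c ∈ CC, ∀ c' ∈ CC, c ≠ c' → Disjoint (Fc c) (Fc c') := by
    intro c _ c' _ hcc
    have hUU := hUc_disj hcc
    rw [Finset.disjoint_left]
    intro e he he'
    rw [hFcdef, Finset.mem_union] at he he'
    rcases he with h1 | h1 <;> rcases he' with h2 | h2
    · rw [hInC_mem] at h1 h2
      obtain ⟨v, hv⟩ := exists_mem_sym2 e
      exact Finset.disjoint_left.1 hUU (h1.2 v hv) (h2.2 v hv)
    · rw [hInC_mem] at h1
      rw [mem_bd] at h2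
      obtain ⟨v, hve, hvU'⟩ := h2.2.1
      exact Finset.disjoint_left.1 hUU (h1.2 v hve) hvU'
    · rw [hInC_mem] at h2
      rw [mem_bd] at h1
      obtain ⟨v, hve, hvU⟩ := h1.2.1
      exact Finset.disjoint_left.1 hUU hvU (h2.2 v hve)
    · rw [mem_bd] at h1 h2
      obtain ⟨heE, ⟨v, hve, hvU⟩, hnall⟩ := h1
      obtain ⟨-, ⟨v', hv'e, hv'U'⟩, hnall'⟩ := h2
      have hw : s(v, Sym2.Mem.other hve) = e := Sym2.other_spec hve
      set w := Sym2.Mem.other hve with hwdef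
      have hv'w : v' = w := by
        rcases Sym2.mem_iff.1 (hw ▸ hv'e) with h | h
        · exact absurd hv'U' (fun hh => Finset.disjoint_left.1 hUU hvU (h ▸ hh))
        · exact h
      have hwU' : w ∈ Uc c' := hv'w ▸ hv'U'
      have hadj : T.Adj v w := by
        rw [← SimpleGraph.mem_edgeSet, hw]
        exact SimpleGraph.mem_edgeFinset.1 heE
      obtain ⟨p, hp, hvp⟩ := (hUc_mem c v).1 hvU
      obtain ⟨q, hq, hwq⟩ := (hUc_mem c' w).1 hwU'
      have hxy : (⟨p, hPc_SP c p hp⟩ : {p // p ∈ SP}) ≠ ⟨q, hPc_SP c' q hq⟩ := by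
        intro hh
        have hpq : p = q := congrArg Subtype.val hh
        subst hpq
        exact hcc ((hPc_mk c p hp).symm.trans (hPc_mk c' p hq))
      have hKadj : K.Adj ⟨p, hPc_SP c p hp⟩ ⟨q, hPc_SP c' q hq⟩ :=
        ⟨hxy, v, hvp, w, hwq, hadj⟩
      have hmkeq := SimpleGraph.ConnectedComponent.connectedComponentMk_eq_of_adj hKadj
      exact hcc (((hPc_mk c p hp).symm.trans hmkeq).trans (hPc_mk c' q hq))
  have hsum_le : ∑ c ∈ CC, (Fc c).card ≤ (crossing T P).card := by
    rw [← Finset.card_biUnion hFc_disj]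
    exact Finset.card_le_card (Finset.biUnion_subset.2 (fun c _ => hFc_sub c))
  have hfib_sum : ∑ c ∈ CC, (Pc c).card = SP.card := by
    have h1 : ∑ c ∈ CC, (fib c).card = Fintype.card {p // p ∈ SP} := by
      rw [← Finset.card_univ]
      exact (Finset.card_eq_sum_card_fiberwise
        (fun x _ => Finset.mem_image_of_mem mk (Finset.mem_univ x))).symm
    rw [Finset.sum_congr rfl (fun c _ => hPc_card c), h1, Fintype.card_coe]
  have hcross : (crossing T P).card + 1 = P.card := crossing_card T hT P hcov hdisjP hconn
  have hkey : ∀ c ∈ CC, 2 * (Pc c).card + 1 ≤ (Fc c).card := by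
    intro c hc
    have e1 := hFc_card c hc
    have e2 := hInC_card c hc
    have e3 := hbd_card c hc
    have e4 := hPc_le_Uc c
    omega
  have hmain : ∑ c ∈ CC, (2 * (Pc c).card + 1) ≤ (crossing T P).card :=
    le_trans (Finset.sum_le_sum hkey) hsum_le
  -- numerical conclusion
  have hBpos : (0:ℝ) < (b:ℝ) := by exact_mod_cast hb
  have h2b : (0:ℝ) < 2*(b:ℝ)+1 := by linarith
  have hr1 : 1 ≤ P.card := by omega
  have hcast : ((crossing T P).card : ℝ) = (P.card : ℝ) - 1 := by
    have h := hcross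
    push_cast [← h]
    ring
  have hterm : ∀ c ∈ CC, (2*(b:ℝ)+1) * ((Pc c).card : ℝ) ≤ (b:ℝ) * (2 * ((Pc c).card:ℝ) + 1) := by
    intro c hc
    have hPb : ((Pc c).card : ℝ) ≤ (b:ℝ) := by
      exact_mod_cast le_trans (hPc_le_Uc c) (hUc_b c hc)
    nlinarith
  have hsum_cast : ((SP.card : ℝ)) = ∑ c ∈ CC, ((Pc c).card : ℝ) := by
    exact_mod_cast hfib_sum.symm
  have hsR : (2*(b:ℝ)+1) * (SP.card:ℝ) ≤ (b:ℝ) * ((P.card:ℝ) - 1) := by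
    calc (2*(b:ℝ)+1) * (SP.card:ℝ) = ∑ c ∈ CC, (2*(b:ℝ)+1) * ((Pc c).card : ℝ) := by
          rw [hsum_cast, Finset.mul_sum]
      _ ≤ ∑ c ∈ CC, (b:ℝ) * (2 * ((Pc c).card:ℝ) + 1) := Finset.sum_le_sum hterm
      _ = (b:ℝ) * ∑ c ∈ CC, (2 * ((Pc c).card:ℝ) + 1) := by rw [Finset.mul_sum]
      _ ≤ (b:ℝ) * ((P.card:ℝ) - 1) := by
          refine mul_le_mul_of_nonneg_left ?_ (le_of_lt hBpos)
          rw [← hcast]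
          exact_mod_cast hmain
  rw [div_mul_eq_mul_div, div_le_iff₀ h2b]
  have hr1R : (0:ℝ) ≤ (P.card:ℝ) - 1 := by
    have : (1:ℝ) ≤ (P.card:ℝ) := by exact_mod_cast hr1
    linarith
  nlinarith

end Stmt15Aux

/-- Let `G` be `b`-quasi-bipartite (with metric assumptions A1, A2),
`T*` an optimum Steiner tree, and `π` a partition of `V(T*)` each of whose parts
induces a connected subtree of `T*`.  If every Steiner vertex of `T*` has degree at
least 3, then `r̄(π) − 1 ≥ ((b+1)/(2b+1)) · (r(π) − 1)`. -/
theorem stmt15 [Fintype V] (G : SimpleGraph V) (R : Finset V)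
    (c : Sym2 V → ℝ) (hc : ∀ e, 0 ≤ c e) (b : ℕ) (hb : 1 ≤ b)
    (hqb : QuasiBipartite G (R : Set V) b)
    (hA1 : AssumptionA1 G (R : Set V) c) (hA2 : AssumptionA2 G (R : Set V) c)
    (Tstar : G.Subgraph) (hTt : Tstar.coe.IsTree) (hTR : (R : Set V) ⊆ Tstar.verts)
    (hTopt : ∀ T' : G.Subgraph, T'.coe.IsTree → (R : Set V) ⊆ T'.verts →
      (∑ᶠ e ∈ Tstar.edgeSet, c e) ≤ ∑ᶠ e ∈ T'.edgeSet, c e)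
    (hdeg : ∀ v ∈ Tstar.verts, v ∉ (R : Set V) → 3 ≤ Tstar.degree v)
    (W : Finset V) (hW : (W : Set V) = Tstar.verts)
    (π : Finpartition W)
    (hconn : ∀ P ∈ π.parts, ((Tstar.induce (P : Set V)).coe).Connected) :
    ((b : ℝ) + 1) / (2 * (b : ℝ) + 1) * ((π.parts.card : ℝ) - 1) ≤
      ((π.parts.filter fun P => ∃ t ∈ P, t ∈ R).card : ℝ) - 1 := by
  set T : SimpleGraph ↥Tstar.verts := Tstar.coe with hT
  set Rt : Set ↥Tstar.verts := {v | (v : V) ∈ R} with hRt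
  have hWv : ∀ {a : V}, a ∈ W → a ∈ Tstar.verts := fun {a} ha => by
    rw [← hW]; exact ha
  have hsubW : ∀ p ∈ π.parts, p ⊆ W := fun p hp => π.le hp
  set f : Finset V → Finset ↥Tstar.verts :=
    fun p => Finset.univ.filter (fun v => (v : V) ∈ p) with hf
  have hfmem : ∀ (p : Finset V) (v : ↥Tstar.verts), v ∈ f p ↔ (v : V) ∈ p := by
    intro p v; rw [hf]; simp
  set P : Finset (Finset ↥Tstar.verts) := π.parts.image f with hP
  have hfinj : Set.InjOn f π.parts := by
    have hsub : ∀ p ∈ π.parts, ∀ q ∈ π.parts, f p = f q → p ⊆ q := by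
      intro p hp q hq hpq a ha
      have haW : a ∈ Tstar.verts := hWv (hsubW p hp ha)
      have h1 : (⟨a, haW⟩ : ↥Tstar.verts) ∈ f p := (hfmem _ _).2 ha
      rw [hpq] at h1
      exact (hfmem _ _).1 h1
    intro p hp q hq hpq
    exact Finset.Subset.antisymm (hsub p hp q hq hpq) (hsub q hq p hp hpq.symm)
  have hPcard : P.card = π.parts.card := Finset.card_image_of_injOn hfinj
  -- degrees
  have hdeg3 : ∀ v : ↥Tstar.verts, v ∉ Rt → 3 ≤ (T.neighborSet v).ncard := by
    intro v hv
    have h := hdeg (v : V) v.2 hv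
    have hfin : 3 ≤ (Tstar.neighborSet (v : V)).ncard := by
      rw [Set.ncard_eq_toFinset_card', SimpleGraph.Subgraph.finset_card_neighborSet_eq_degree]
      convert h using 2
    have heq : (T.neighborSet v).ncard = (Tstar.neighborSet (v : V)).ncard := by
      rw [← Nat.card_coe_set_eq, ← Nat.card_coe_set_eq]
      exact Nat.card_congr (SimpleGraph.Subgraph.coeNeighborSetEquiv v)
    rw [heq]
    exact hfin
  -- small components
  have hsmall : ∀ U : Finset ↥Tstar.verts, (∀ v ∈ U, v ∉ Rt) →
      (T.induce (U : Set ↥Tstar.verts)).Connected → U.card ≤ b := by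
    intro U hURt hUconn
    rcases U.eq_empty_or_nonempty with rfl | ⟨v₀, hv₀⟩
    · simpa using Nat.zero_le b
    · have hφrel : ∀ {x y : ↥(U : Set ↥Tstar.verts)},
          (T.induce (U : Set ↥Tstar.verts)).Adj x y →
          (offR G (R : Set V)).Adj ((x : ↥Tstar.verts) : V) ((y : ↥Tstar.verts) : V) := by
        intro x y hxy
        have hadj : Tstar.Adj ((x : ↥Tstar.verts) : V) ((y : ↥Tstar.verts) : V) := hxy
        refine (⟨hadj.adj_sub, ?_, ?_⟩ : G.Adj _ _ ∧ _ ∉ (R : Set V) ∧ _ ∉ (R : Set V))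
        · exact hURt _ x.2
        · exact hURt _ y.2
      let φ : (T.induce (U : Set ↥Tstar.verts)) →g offR G (R : Set V) :=
        ⟨fun x => ((x : ↥Tstar.verts) : V), hφrel⟩
      have hv₀' : v₀ ∈ (U : Set ↥Tstar.verts) := hv₀
      have hreach : ∀ u ∈ U, (offR G (R : Set V)).Reachable ((v₀ : ↥Tstar.verts) : V) (u : V) := by
        intro u hu
        have hu' : u ∈ (U : Set ↥Tstar.verts) := hu
        have hr := hUconn.preconnected ⟨v₀, hv₀'⟩ ⟨u, hu'⟩
        exact hr.map φ
      have hsub : ((U.image (fun u : ↥Tstar.verts => (u : V)) : Finset V) : Set V)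
          ⊆ {u | (offR G (R : Set V)).Reachable ((v₀ : ↥Tstar.verts) : V) u} := by
        intro a ha
        rw [Finset.mem_coe, Finset.mem_image] at ha
        obtain ⟨u, hu, rfl⟩ := ha
        exact hreach u hu
      calc U.card = (U.image (fun u : ↥Tstar.verts => (u : V))).card :=
            (Finset.card_image_of_injective _ Subtype.val_injective).symm
        _ = ((U.image (fun u : ↥Tstar.verts => (u : V)) : Finset V) : Set V).ncard :=
            (Set.ncard_coe_finset _).symm
        _ ≤ ({u | (offR G (R : Set V)).Reachable ((v₀ : ↥Tstar.verts) : V) u}).ncard :=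
            Set.ncard_le_ncard hsub (Set.toFinite _)
        _ ≤ b := hqb _ (hURt v₀ hv₀)
  -- cover
  have hcov : ∀ a : ↥Tstar.verts, ∃ p ∈ P, a ∈ p := by
    intro a
    have haW : (a : V) ∈ W := by rw [← Finset.mem_coe, hW]; exact a.2
    obtain ⟨p, hp, hap⟩ := π.exists_mem haW
    exact ⟨f p, Finset.mem_image_of_mem f hp, (hfmem p a).2 hap⟩
  -- disjoint
  have hdisjP : ∀ p ∈ P, ∀ q ∈ P, p ≠ q → Disjoint p q := by
    intro p hp q hq hpq
    obtain ⟨p₀, hp₀, rfl⟩ := Finset.mem_image.1 hp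
    obtain ⟨q₀, hq₀, rfl⟩ := Finset.mem_image.1 hq
    have hpq₀ : p₀ ≠ q₀ := fun h => hpq (by rw [h])
    have hd := π.disjoint hp₀ hq₀ hpq₀
    rw [Finset.disjoint_left]
    intro v hv hv'
    exact Finset.disjoint_left.1 hd ((hfmem p₀ v).1 hv) ((hfmem q₀ v).1 hv')
  -- nonempty
  have hne : ∀ p ∈ P, p.Nonempty := by
    intro p hp
    obtain ⟨p₀, hp₀, rfl⟩ := Finset.mem_image.1 hp
    obtain ⟨a, ha⟩ := Finset.nonempty_iff_ne_empty.2 (π.ne_bot hp₀)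
    exact ⟨⟨a, hWv (hsubW p₀ hp₀ ha)⟩, (hfmem p₀ _).2 ha⟩
  -- connectivity of parts
  have hconn' : ∀ p ∈ P, (T.induce (p : Set ↥Tstar.verts)).Connected := by
    intro p hp
    obtain ⟨p₀, hp₀, rfl⟩ := Finset.mem_image.1 hp
    have h := hconn p₀ hp₀
    have e : (Tstar.induce (p₀ : Set V)).coe ≃g
        T.induce ((f p₀ : Finset ↥Tstar.verts) : Set ↥Tstar.verts) :=
      { toEquiv :=
          ⟨fun x => ⟨⟨(x : V), hWv (hsubW p₀ hp₀ x.2)⟩, (hfmem p₀ _).2 x.2⟩,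
           fun y => ⟨((y : ↥Tstar.verts) : V), (hfmem p₀ _).1 y.2⟩,
           fun x => Subtype.ext rfl,
           fun y => Subtype.ext (Subtype.ext rfl)⟩
        map_rel_iff' := @fun a b => ⟨fun h => ⟨a.2, b.2, h⟩, fun h => h.2.2⟩ }
    exact e.connected_iff.1 h
  -- filter transfer
  have hiff : ∀ p₀ ∈ π.parts, ((∃ t ∈ f p₀, t ∈ Rt) ↔ ∃ t ∈ p₀, t ∈ R) := by
    intro p₀ hp₀
    constructor
    · rintro ⟨t, ht, htR⟩; exact ⟨(t : V), (hfmem p₀ t).1 ht, htR⟩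
    · rintro ⟨t, ht, htR⟩
      exact ⟨⟨t, hWv (hsubW p₀ hp₀ ht)⟩, (hfmem p₀ _).2 ht, htR⟩
  have hfilter : (P.filter fun p => ∃ t ∈ p, t ∈ Rt).card
      = (π.parts.filter fun p => ∃ t ∈ p, t ∈ R).card := by
    rw [hP, Finset.filter_image]
    rw [Finset.card_image_of_injOn (hfinj.mono (by exact_mod_cast Finset.filter_subset _ _))]
    congr 1
    exact Finset.filter_congr hiff
  set SPv : Finset (Finset ↥Tstar.verts) := P.filter (fun p => ¬ ∃ t ∈ p, t ∈ Rt) with hSPv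
  have hSP_sub : SPv ⊆ P := Finset.filter_subset _ _
  have hSP_iff : ∀ p ∈ P, (p ∈ SPv ↔ ∀ v ∈ p, v ∉ Rt) := by
    intro p hp
    rw [hSPv, Finset.mem_filter]
    simp only [hp, true_and]
    push_neg
    rfl
  have hmain := Stmt15Aux.core T hTt Rt b hb hdeg3 hsmall P hcov hdisjP hne hconn'
    SPv hSP_sub hSP_iff
  have hcount : (P.filter fun p => ∃ t ∈ p, t ∈ Rt).card + SPv.card = P.card :=
    Finset.card_filter_add_card_filter_not _
  have hSPle : SPv.card ≤ P.card := Finset.card_le_card hSP_sub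
  have hfin : ((π.parts.filter fun p => ∃ t ∈ p, t ∈ R).card : ℝ)
      = (P.card : ℝ) - (SPv.card : ℝ) := by
    rw [← hfilter]
    have h := hcount
    push_cast [← h]
    ring
  rw [hfin, ← hPcard]
  exact hmain
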